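/- Let π_1,…,π_K be positive weights summing to 1, and for each k let f_k be a bounded measurable function on H_k. Then the network risk satisfies R(f) = Σ_{k=1}^K π_k R_k(f_k) ≥ log( 1 + exp( −(μ^+(f) − μ^−(f))/2 ) ), where μ^±(f) = Σ_{k=1}^K π_k μ_k^±(f_k). -/

import Mathlib

open MeasureTheory

private lemma logistic_hasDerivAt (x : ℝ) :
    HasDerivAt (fun x : ℝ => Real.log (1 + Real.exp (-x)))
      (-Real.exp (-x) / (1 + Real.exp (-x))) x := by
  have hpos : (0:ℝ) < 1 + Real.exp (-x) := by positivity
  have h1 : HasDerivAt (fun y : ℝ => 1 + Real.exp (-y)) (-Real.exp (-x)) x := by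
    have := (Real.hasDerivAt_exp (-x)).comp x (hasDerivAt_neg x)
    simpa [mul_comm] using this.const_add 1
  simpa using h1.log (ne_of_gt hpos)

private lemma logistic_continuous :
    Continuous (fun x : ℝ => Real.log (1 + Real.exp (-x))) :=
  continuous_iff_continuousAt.2 fun x => (logistic_hasDerivAt x).continuousAt

private lemma logistic_convex :
    ConvexOn ℝ Set.univ (fun x : ℝ => Real.log (1 + Real.exp (-x))) := by
  set φ : ℝ → ℝ := fun x => Real.log (1 + Real.exp (-x)) with hφ
  set ψ : ℝ → ℝ := fun x => -Real.exp (-x) / (1 + Real.exp (-x)) with hψ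
  have hderiv : deriv φ = ψ := by
    funext x; exact (logistic_hasDerivAt x).deriv
  have hψd : ∀ x : ℝ, HasDerivAt ψ
      (Real.exp (-x) / (1 + Real.exp (-x))^2) x := by
    intro x
    have hpos : (0:ℝ) < 1 + Real.exp (-x) := by positivity
    have hnum : HasDerivAt (fun y : ℝ => -Real.exp (-y)) (Real.exp (-x)) x := by
      have := (Real.hasDerivAt_exp (-x)).comp x (hasDerivAt_neg x)
      simpa [mul_comm, Function.comp_def, Pi.neg_def] using this.neg
    have hden : HasDerivAt (fun y : ℝ => 1 + Real.exp (-y)) (-Real.exp (-x)) x := by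
      have := (Real.hasDerivAt_exp (-x)).comp x (hasDerivAt_neg x)
      simpa [mul_comm] using this.const_add 1
    have := hnum.div hden (ne_of_gt hpos)
    refine this.congr_deriv ?_
    ring
  apply convexOn_of_deriv2_nonneg convex_univ logistic_continuous.continuousOn
  · intro x _
    exact (logistic_hasDerivAt x).differentiableAt.differentiableWithinAt
  · intro x _
    rw [hderiv]
    exact (hψd x).differentiableAt.differentiableWithinAt
  · intro x _
    have : deriv^[2] φ x = deriv (deriv φ) x := rfl
    rw [this, hderiv, (hψd x).deriv]
    positivity

private lemma integrable_log_one_add_exp {α : Type*} [MeasurableSpace α]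
    (μ : Measure α) [IsProbabilityMeasure μ] (g : α → ℝ) (hg : Measurable g)
    (C : ℝ) (hC : ∀ h, g h ≤ C) :
    Integrable (fun h => Real.log (1 + Real.exp (g h))) μ := by
  refine ⟨((measurable_const.add (Real.measurable_exp.comp hg)).log).aestronglyMeasurable, ?_⟩
  apply MeasureTheory.HasFiniteIntegral.of_bounded (C := Real.log (1 + Real.exp C))
  filter_upwards with h
  have h1 : (0:ℝ) ≤ Real.log (1 + Real.exp (g h)) := by
    apply Real.log_nonneg; have := Real.exp_pos (g h); linarith
  rw [Real.norm_eq_abs, abs_of_nonneg h1]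
  apply Real.log_le_log (by positivity)
  have := Real.exp_le_exp.2 (hC h); linarith

/-- With positive weights `π_1,…,π_K` summing to 1 and bounded measurable
functions `f_k` on `H_k`, the network logistic risk `R(f) = Σ_k π_k R_k(f_k)` satisfies
`R(f) ≥ log(1 + exp(−(μ⁺(f) − μ⁻(f))/2))`. -/
theorem network_risk_lower_bound
    {K : ℕ} (H : Fin K → Type*) [∀ k, MeasurableSpace (H k)]
    (Lp Lm : ∀ k, Measure (H k))
    [∀ k, IsProbabilityMeasure (Lp k)] [∀ k, IsProbabilityMeasure (Lm k)]
    (f : ∀ k, H k → ℝ) (hf : ∀ k, Measurable (f k))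
    (C : Fin K → ℝ) (hbd : ∀ k h, |f k h| ≤ C k)
    (π : Fin K → ℝ) (hπ : ∀ k, 0 < π k) (hπs : ∑ k, π k = 1) :
    ∑ k, π k * ((1/2) * (∫ h, Real.log (1 + Real.exp (-(f k h))) ∂(Lp k))
        + (1/2) * (∫ h, Real.log (1 + Real.exp (f k h)) ∂(Lm k)))
    ≥ Real.log (1 + Real.exp (-(((∑ k, π k * ∫ h, f k h ∂(Lp k))
        - ∑ k, π k * ∫ h, f k h ∂(Lm k)) / 2))) := by
  have hconv := logistic_convex
  have hcont := logistic_continuous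
  have hfint : ∀ k, Integrable (f k) (Lp k) ∧ Integrable (f k) (Lm k) := by
    intro k
    constructor <;>
      refine ⟨(hf k).aestronglyMeasurable,
        MeasureTheory.HasFiniteIntegral.of_bounded (C := C k) ?_⟩ <;>
      · filter_upwards with h
        simpa [Real.norm_eq_abs] using hbd k h
  have key : ∀ k, Real.log (1 + Real.exp
        (-((∫ h, f k h ∂(Lp k) - ∫ h, f k h ∂(Lm k)) / 2)))
      ≤ (1/2) * (∫ h, Real.log (1 + Real.exp (-(f k h))) ∂(Lp k))
        + (1/2) * (∫ h, Real.log (1 + Real.exp (f k h)) ∂(Lm k)) := by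
    intro k
    have hbd' : ∀ h, f k h ≤ C k ∧ -(C k) ≤ f k h :=
      fun h => ⟨(abs_le.1 (hbd k h)).2, (abs_le.1 (hbd k h)).1⟩
    have j1 : Real.log (1 + Real.exp (-(∫ h, f k h ∂(Lp k))))
        ≤ ∫ h, Real.log (1 + Real.exp (-(f k h))) ∂(Lp k) := by
      have := hconv.map_integral_le (μ := Lp k) (f := f k)
        hcont.continuousOn isClosed_univ
        (Filter.Eventually.of_forall fun _ => Set.mem_univ _) (hfint k).1
        (by
          have := integrable_log_one_add_exp (Lp k) (fun h => -(f k h))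
            (hf k).neg (C k) (fun h => neg_le.mpr (hbd' h).2)
          simpa [Function.comp_def] using this)
      simpa using this
    have j2 : Real.log (1 + Real.exp (∫ h, f k h ∂(Lm k)))
        ≤ ∫ h, Real.log (1 + Real.exp (f k h)) ∂(Lm k) := by
      have := hconv.map_integral_le (μ := Lm k) (f := fun h => -(f k h))
        hcont.continuousOn isClosed_univ
        (Filter.Eventually.of_forall fun _ => Set.mem_univ _) (hfint k).2.neg
        (by
          have := integrable_log_one_add_exp (Lm k) (f k) (hf k) (C k)
            (fun h => (hbd' h).1)
          simpa [Function.comp_def] using this)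
      simpa [integral_neg] using this
    set a := ∫ h, f k h ∂(Lp k) with ha
    set b := ∫ h, f k h ∂(Lm k) with hb
    have jm := hconv.2 (Set.mem_univ a) (Set.mem_univ (-b))
      (by norm_num : (0:ℝ) ≤ 1/2) (by norm_num : (0:ℝ) ≤ 1/2) (by norm_num)
    simp only [smul_eq_mul, neg_neg] at jm
    have harg : (1/2 : ℝ) * a + 1/2 * -b = (a - b) / 2 := by ring
    rw [harg] at jm
    linarith
  have jd := hconv.map_sum_le (t := Finset.univ) (w := π)
    (p := fun k => (∫ h, f k h ∂(Lp k) - ∫ h, f k h ∂(Lm k)) / 2)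
    (fun k _ => (hπ k).le) hπs (fun k _ => Set.mem_univ _)
  simp only [smul_eq_mul] at jd
  have hsum : ∑ k, π k * ((∫ h, f k h ∂(Lp k) - ∫ h, f k h ∂(Lm k)) / 2)
      = ((∑ k, π k * ∫ h, f k h ∂(Lp k)) - ∑ k, π k * ∫ h, f k h ∂(Lm k)) / 2 := by
    rw [← Finset.sum_sub_distrib, Finset.sum_div]
    exact Finset.sum_congr rfl fun k _ => by ring
  rw [hsum] at jd
  exact le_trans jd
    (Finset.sum_le_sum fun k _ => mul_le_mul_of_nonneg_left (key k) (hπ k).le)
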